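/- Let u ≥ 1, v ≥ 2 be natural numbers and ε ≥ 0. There exist a nonempty finite set Z and a channel matrix M from X = (Fin u → Fin v) to Z such that M provides ε-differential privacy and the min-entropy leakage of M under the uniform prior equals exactly u · log₂( v·e^ε / (v − 1 + e^ε) ); equivalently, log₂( ∑_{z ∈ Z} max_{x ∈ X} M x z ) = u · log₂( v·e^ε / (v − 1 + e^ε) ). -/

import Mathlib

open Finset

theorem dp_leakage_bound_tight
    (u v : ℕ) (hu : 1 ≤ u) (hv : 2 ≤ v)
    (ε : ℝ) (hε : 0 ≤ ε) :
    ∃ (m : ℕ) (_ : 1 ≤ m) (M : (Fin u → Fin v) → Fin m → ℝ),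
      (∀ x z, 0 ≤ M x z) ∧
      (∀ x, ∑ z, M x z = 1) ∧
      (∀ x x' : Fin u → Fin v, hammingDist x x' = 1 →
        ∀ z, M x z ≤ Real.exp ε * M x' z) ∧
      Real.logb 2 (∑ z, ⨆ x, M x z)
        = u * Real.logb 2 (v * Real.exp ε / (v - 1 + Real.exp ε)) := by
  set c : ℝ := (v : ℝ) - 1 + Real.exp ε with hc
  have hv1 : (1:ℝ) ≤ (v:ℝ) - 1 := by
    have : (2:ℝ) ≤ (v:ℝ) := by exact_mod_cast hv
    linarith
  have hexp1 : 1 ≤ Real.exp ε := Real.one_le_exp hε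
  have hcpos : 0 < c := by rw [hc]; linarith
  set f : Fin v → Fin v → ℝ := fun a b => if a = b then Real.exp ε / c else 1 / c with hf
  have hfnn : ∀ a b, 0 ≤ f a b := by
    intro a b; rw [hf]; dsimp only; split <;> positivity
  have hfle : ∀ a b, f a b ≤ Real.exp ε / c := by
    intro a b; rw [hf]; dsimp only; split
    · exact le_refl _
    · gcongr
  have hfge : ∀ a b, 1 / c ≤ f a b := by
    intro a b; rw [hf]; dsimp only; split
    · gcongr
    · exact le_refl _
  have hfratio : ∀ a a' b, f a b ≤ Real.exp ε * f a' b := by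
    intro a a' b
    calc f a b ≤ Real.exp ε / c := hfle a b
    _ = Real.exp ε * (1 / c) := by ring
    _ ≤ Real.exp ε * f a' b := by
        have := hfge a' b
        nlinarith [Real.exp_pos ε]
  have hfsum : ∀ a : Fin v, ∑ b, f a b = 1 := by
    intro a
    have hsplit : ∀ b, f a b = 1 / c + (if a = b then (Real.exp ε - 1) / c else 0) := by
      intro b; rw [hf]; dsimp only; split <;> ring
    have : ∑ b, f a b = ∑ b : Fin v, (1 / c + if a = b then (Real.exp ε - 1) / c else 0) :=
      Finset.sum_congr rfl fun b _ => hsplit b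
    rw [this, Finset.sum_add_distrib, Finset.sum_ite_eq, Finset.sum_const]
    simp only [Finset.mem_univ, if_true, Finset.card_univ, Fintype.card_fin, nsmul_eq_mul]
    field_simp
    ring
  -- the channel
  let e := (finFunctionFinEquiv : (Fin u → Fin v) ≃ Fin (v ^ u))
  set M : (Fin u → Fin v) → Fin (v ^ u) → ℝ :=
    fun x z => ∏ i, f (x i) (e.symm z i) with hM
  have hMnn : ∀ x z, 0 ≤ M x z := by
    intro x z; exact Finset.prod_nonneg fun i _ => hfnn _ _
  haveI : Nonempty (Fin u → Fin v) := ⟨fun _ => ⟨0, by omega⟩⟩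
  refine ⟨v ^ u, Nat.one_le_pow _ _ (by omega), M, hMnn, ?_, ?_, ?_⟩
  · -- row sums
    intro x
    have := Fintype.sum_equiv e.symm (fun z => M x z)
      (fun w => ∏ i, f (x i) (w i)) (fun z => rfl)
    rw [show (∑ z, M x z) = ∑ w : Fin u → Fin v, ∏ i, f (x i) (w i) by
      rw [← this]]
    rw [← Fintype.prod_sum (fun i b => f (x i) b)]
    simp [hfsum]
  · -- DP
    intro x x' hd z
    have hone : (Finset.univ.filter fun i => x i ≠ x' i).card = 1 := hd
    obtain ⟨i, hi⟩ := Finset.card_eq_one.mp hone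
    have heqj : ∀ j, j ≠ i → x j = x' j := by
      intro j hj
      by_contra h
      have : j ∈ Finset.univ.filter fun i => x i ≠ x' i := by simp [h]
      rw [hi] at this; simp at this; exact hj this
    rw [hM]; dsimp only
    rw [Finset.prod_eq_prod_diff_singleton_mul (Finset.mem_univ i),
        Finset.prod_eq_prod_diff_singleton_mul (Finset.mem_univ i)
          (fun j => f (x' j) (e.symm z j))]
    have hrest : ∏ j ∈ Finset.univ \ {i}, f (x j) (e.symm z j)
        = ∏ j ∈ Finset.univ \ {i}, f (x' j) (e.symm z j) := by
      apply Finset.prod_congr rfl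
      intro j hj
      simp only [Finset.mem_sdiff, Finset.mem_singleton] at hj
      rw [heqj j hj.2]
    rw [hrest, mul_comm (Real.exp ε) _, mul_assoc]
    apply mul_le_mul_of_nonneg_left _ (Finset.prod_nonneg fun j _ => hfnn _ _)
    rw [mul_comm]
    exact hfratio _ _ _
  · -- leakage
    have hsup : ∀ z : Fin (v ^ u), (⨆ x, M x z) = (Real.exp ε / c) ^ u := by
      intro z
      apply le_antisymm
      · apply ciSup_le
        intro x
        calc M x z ≤ ∏ _i : Fin u, Real.exp ε / c :=
              Finset.prod_le_prod (fun i _ => hfnn _ _) (fun i _ => hfle _ _)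
        _ = (Real.exp ε / c) ^ u := by simp [div_pow]
      · have : M (e.symm z) z = (Real.exp ε / c) ^ u := by
          rw [hM]; dsimp only
          rw [show (∏ i, f (e.symm z i) (e.symm z i)) = ∏ _i : Fin u, Real.exp ε / c by
            apply Finset.prod_congr rfl; intro i _; rw [hf]; simp]
          simp [div_pow]
        rw [← this]
        exact le_ciSup (f := fun x => M x z)
          (Set.Finite.bddAbove (Set.finite_range _)) (e.symm z)
    rw [show (∑ z, ⨆ x, M x z) = ∑ _z : Fin (v ^ u), (Real.exp ε / c) ^ u from
      Finset.sum_congr rfl fun z _ => hsup z]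
    rw [Finset.sum_const, Finset.card_univ, Fintype.card_fin, nsmul_eq_mul]
    push_cast
    have key : (v ^ u : ℝ) * (Real.exp ε / c) ^ u = ((v : ℝ) * Real.exp ε / c) ^ u := by
      rw [div_pow, div_pow, mul_pow]
      ring
    rw [key, Real.logb_pow]
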